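/- (Subgradient of the SPO+ loss used in the stochastic subgradient algorithm.) For every fixed y ∈ ℝ^d and every ŷ ∈ ℝ^d, the vector 2·(w*(y) − w*(2ŷ − y)) is a subgradient of the function ŷ ↦ ℓ_SPO+(ŷ, y) at ŷ; that is, for every u ∈ ℝ^d, ℓ_SPO+(u, y) ≥ ℓ_SPO+(ŷ, y) + ⟨2·(w*(y) − w*(2ŷ − y)), u − ŷ⟩. -/
import Mathlib


open MeasureTheory
open scoped RealInnerProductSpace

noncomputable section

/-- The SPO+ loss: `ℓ_SPO+(ŷ, y) = sup_{w ∈ S} ⟨y − 2ŷ, w⟩ + 2⟨ŷ, w*(y)⟩ − ⟨y, w*(y)⟩`. -/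
def lSPOplus {d : ℕ} (S : Set (EuclideanSpace ℝ (Fin d)))
    (wStar : EuclideanSpace ℝ (Fin d) → EuclideanSpace ℝ (Fin d))
    (yhat y : EuclideanSpace ℝ (Fin d)) : ℝ :=
  sSup ((fun w => ⟪y - (2 : ℝ) • yhat, w⟫) '' S) + 2 * ⟪yhat, wStar y⟫ - ⟪y, wStar y⟫

/-- `2 (w*(y) − w*(2ŷ − y))` is a subgradient of `ŷ ↦ ℓ_SPO+(ŷ, y)` at `ŷ`. -/
theorem spoPlus_subgradient {d : ℕ} (S : Set (EuclideanSpace ℝ (Fin d)))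
    (hS : S.Nonempty) (hSc : IsCompact S)
    (wStar : EuclideanSpace ℝ (Fin d) → EuclideanSpace ℝ (Fin d))
    (hOracle : ∀ c : EuclideanSpace ℝ (Fin d),
      wStar c ∈ S ∧ ∀ w ∈ S, ⟪c, wStar c⟫ ≤ ⟪c, w⟫)
    (y yhat : EuclideanSpace ℝ (Fin d)) :
    ∀ u : EuclideanSpace ℝ (Fin d),
      lSPOplus S wStar u y ≥ lSPOplus S wStar yhat y +
        ⟪(2 : ℝ) • (wStar y - wStar ((2 : ℝ) • yhat - y)), u - yhat⟫ := by
  intro u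
  obtain ⟨hw0S, hw0⟩ := hOracle ((2 : ℝ) • yhat - y)
  set w0 := wStar ((2 : ℝ) • yhat - y) with hw0def
  have hbdd : ∀ v : EuclideanSpace ℝ (Fin d),
      BddAbove ((fun w => ⟪y - (2 : ℝ) • v, w⟫) '' S) := fun v =>
    (hSc.image (Continuous.inner continuous_const continuous_id)).bddAbove
  have hsup_yhat : sSup ((fun w => ⟪y - (2 : ℝ) • yhat, w⟫) '' S)
      = ⟪y - (2 : ℝ) • yhat, w0⟫ := by
    apply le_antisymm
    · apply csSup_le (hS.image _)
      rintro _ ⟨w, hw, rfl⟩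
      have h := hw0 w hw
      have h1 : ⟪y - (2 : ℝ) • yhat, w⟫ = -⟪(2 : ℝ) • yhat - y, w⟫ := by
        rw [← inner_neg_left]; congr 1; abel
      have h2 : ⟪y - (2 : ℝ) • yhat, w0⟫ = -⟪(2 : ℝ) • yhat - y, w0⟫ := by
        rw [← inner_neg_left]; congr 1; abel
      dsimp only; rw [h1, h2]; linarith
    · exact le_csSup (hbdd yhat) ⟨w0, hw0S, rfl⟩
  have hsup_u : ⟪y - (2 : ℝ) • u, w0⟫ ≤ sSup ((fun w => ⟪y - (2 : ℝ) • u, w⟫) '' S) :=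
    le_csSup (hbdd u) ⟨w0, hw0S, rfl⟩
  unfold lSPOplus
  rw [hsup_yhat]
  have key : ⟪y - (2 : ℝ) • yhat, w0⟫ + 2 * ⟪yhat, wStar y⟫ - ⟪y, wStar y⟫ +
      ⟪(2 : ℝ) • (wStar y - w0), u - yhat⟫
      = ⟪y - (2 : ℝ) • u, w0⟫ + 2 * ⟪u, wStar y⟫ - ⟪y, wStar y⟫ := by
    simp only [inner_sub_left, inner_sub_right, inner_smul_left, inner_smul_right,
      RCLike.ofReal_real_eq_id, id, starRingEnd_apply, star_trivial]
    linarith [real_inner_comm w0 u, real_inner_comm w0 yhat,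
      real_inner_comm (wStar y) u, real_inner_comm (wStar y) yhat]
  linarith [key, hsup_u]
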